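/- Let l be a {0,1}-valued stochastic process with partial sums L(k) = ∑_{i=0}^{k-1} l(i) satisfying liminf_{k→∞} L(k)/k ≥ σ almost surely, where σ ∈ [0,1]. Let β̂ ∈ (0,1) and φ̂ ∈ [1,∞) satisfy (1−σ)·ln β̂ + σ·ln φ̂ > 0. Then the random products η(k) := ∏_{i=0}^{k-1} ( (1 − l(i))·β̂ + l(i)·φ̂ ) diverge to +∞ almost surely as k → ∞; in fact, almost surely liminf_{k→∞} (ln η(k))/k ≥ (1−σ)·ln β̂ + σ·ln φ̂ > 0. -/

import Mathlib

open MeasureTheory Filter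

/-- if the long-run loss ratio is at least `σ` a.s. and
`(1−σ)·ln β̂ + σ·ln φ̂ > 0`, then the products
`η(k) = ∏_{i<k} ((1−l(i))β̂ + l(i)φ̂)` diverge to `+∞` almost surely, and in
fact a.s. `liminf_k (ln η(k))/k ≥ (1−σ)·ln β̂ + σ·ln φ̂`. -/
theorem lyapunov_products_tendsto_atTop
    {Ω : Type*} [MeasurableSpace Ω] (μ : Measure Ω) [IsProbabilityMeasure μ]
    (l : ℕ → Ω → ℝ)
    (h01 : ∀ i ω, l i ω = 0 ∨ l i ω = 1)
    (σ : ℝ) (hσ : σ ∈ Set.Icc (0 : ℝ) 1)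
    (hlim : ∀ᵐ ω ∂μ,
      σ ≤ liminf (fun k : ℕ => (∑ i ∈ Finset.range k, l i ω) / k) atTop)
    (βhat φhat : ℝ) (hβ : βhat ∈ Set.Ioo (0 : ℝ) 1) (hφ : 1 ≤ φhat)
    (hrate : 0 < (1 - σ) * Real.log βhat + σ * Real.log φhat) :
    ∀ᵐ ω ∂μ,
      Tendsto (fun k : ℕ =>
          ∏ i ∈ Finset.range k, ((1 - l i ω) * βhat + l i ω * φhat)) atTop atTop ∧
      (1 - σ) * Real.log βhat + σ * Real.log φhat
        ≤ liminf (fun k : ℕ =>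
            Real.log (∏ i ∈ Finset.range k, ((1 - l i ω) * βhat + l i ω * φhat)) / k)
            atTop := by
  filter_upwards [hlim] with ω hω
  set a := Real.log βhat with ha'
  set b := Real.log φhat with hb'
  have ha : a < 0 := Real.log_neg hβ.1 hβ.2
  have hb : 0 ≤ b := Real.log_nonneg hφ
  set d : ℝ := b - a with hd
  have hdpos : 0 < d := by simp only [hd]; linarith
  set L : ℕ → ℝ := fun k => ∑ i ∈ Finset.range k, l i ω with hL
  set r : ℝ := (1 - σ) * a + σ * b with hr
  have hrad : r = a + σ * d := by simp only [hr, hd]; ring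
  -- nonnegativity / boundedness of the loss ratio
  have hl0 : ∀ i, 0 ≤ l i ω := fun i => by rcases h01 i ω with h | h <;> simp [h]
  have hl1 : ∀ i, l i ω ≤ 1 := fun i => by rcases h01 i ω with h | h <;> simp [h]
  have hLnn : ∀ k, 0 ≤ L k := fun k => Finset.sum_nonneg fun i _ => hl0 i
  have hLle : ∀ k : ℕ, L k ≤ k := by
    intro k
    calc L k ≤ ∑ i ∈ Finset.range k, (1 : ℝ) :=
          Finset.sum_le_sum fun i _ => hl1 i
      _ = k := by simp
  -- positivity of each factor
  have hfacpos : ∀ i, 0 < (1 - l i ω) * βhat + l i ω * φhat := by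
    intro i
    rcases h01 i ω with h | h <;> simp [h] <;> linarith [hβ.1, hφ]
  have hprodpos : ∀ k, 0 < ∏ i ∈ Finset.range k, ((1 - l i ω) * βhat + l i ω * φhat) :=
    fun k => Finset.prod_pos fun i _ => hfacpos i
  -- log of product
  have hlog : ∀ k : ℕ,
      Real.log (∏ i ∈ Finset.range k, ((1 - l i ω) * βhat + l i ω * φhat))
        = k * a + L k * d := by
    intro k
    rw [Real.log_prod fun i _ => (hfacpos i).ne']
    have hfac : ∀ i, Real.log ((1 - l i ω) * βhat + l i ω * φhat) = a + l i ω * d := by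
      intro i
      rcases h01 i ω with h | h <;> simp [h, hd] <;> ring
    simp only [hfac, Finset.sum_add_distrib, Finset.sum_const, nsmul_eq_mul,
      Finset.card_range, ← Finset.sum_mul, hL]
  -- the normalized log
  have hfk : ∀ k : ℕ, 1 ≤ k →
      Real.log (∏ i ∈ Finset.range k, ((1 - l i ω) * βhat + l i ω * φhat)) / k
        = a + (L k / k) * d := by
    intro k hk
    have hk' : (k : ℝ) ≠ 0 := Nat.cast_ne_zero.mpr (by omega)
    rw [hlog k]
    field_simp
  -- eventual lower bound on L k / k
  have hev : ∀ ε : ℝ, 0 < ε → ∀ᶠ k : ℕ in atTop,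
      r - ε ≤ Real.log (∏ i ∈ Finset.range k, ((1 - l i ω) * βhat + l i ω * φhat)) / k := by
    intro ε hε
    have hlt : σ - ε / d < liminf (fun k : ℕ => L k / k) atTop := by
      have : σ - ε / d < σ := by
        have := div_pos hε hdpos; linarith
      exact lt_of_lt_of_le this hω
    have hbdd : IsBoundedUnder (· ≥ ·) atTop (fun k : ℕ => L k / k) :=
      isBoundedUnder_of ⟨0, fun k : ℕ => div_nonneg (hLnn k) (Nat.cast_nonneg k)⟩
    have hev' := eventually_lt_of_lt_liminf hlt hbdd
    filter_upwards [hev', eventually_ge_atTop 1] with k hk hk1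
    rw [hfk k hk1, hrad]
    have : (σ - ε / d) * d ≤ (L k / k) * d := by
      exact mul_le_mul_of_nonneg_right hk.le hdpos.le
    have heq : (σ - ε / d) * d = σ * d - ε := by field_simp
    linarith [heq ▸ this]
  constructor
  · -- divergence of the products
    have hc : 0 < r / 2 := by positivity
    have hev2 := hev (r / 2) hc
    have hexp : Tendsto (fun k : ℕ => Real.exp ((r / 2) * k)) atTop atTop := by
      apply Real.tendsto_exp_atTop.comp
      exact Tendsto.const_mul_atTop hc tendsto_natCast_atTop_atTop
    apply tendsto_atTop_mono' atTop _ hexp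
    filter_upwards [hev2, eventually_ge_atTop 1] with k hk hk1
    have hkpos : (0 : ℝ) < k := by exact_mod_cast hk1
    have hlogge : (r / 2) * k ≤
        Real.log (∏ i ∈ Finset.range k, ((1 - l i ω) * βhat + l i ω * φhat)) := by
      have h1 : (r / 2) ≤ Real.log (∏ i ∈ Finset.range k, ((1 - l i ω) * βhat + l i ω * φhat)) / k := by
        linarith
      exact (le_div_iff₀ hkpos).mp h1
    calc Real.exp ((r / 2) * k)
        ≤ Real.exp (Real.log (∏ i ∈ Finset.range k, ((1 - l i ω) * βhat + l i ω * φhat))) :=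
          Real.exp_le_exp.mpr hlogge
      _ = _ := Real.exp_log (hprodpos k)
  · -- liminf lower bound
    apply le_of_forall_sub_le
    intro ε hε
    refine le_liminf_of_le ?_ (hev ε hε)
    refine isCoboundedUnder_ge_of_le atTop (x := b) ?_
    intro k
    rcases Nat.eq_zero_or_pos k with hk | hk
    · simp [hk, hb]
    · rw [hfk k hk]
      have hkpos : (0 : ℝ) < k := by exact_mod_cast hk
      have : L k / k ≤ 1 := (div_le_one hkpos).mpr (hLle k)
      nlinarith [hdpos]
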